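/- For n ≥ 2, the average cyclic Hamming distance of the new code of length n constructed from a cyclic Gray code of length n-1 is at least n - 1, and at most n - 1 + (1/2^{n-1}). -/

import Mathlib

/-- The new counting code of length `m+1` built from a cyclic Gray code
`y` on `m`-bit words: the Gray code followed by its reversal, with every
codeword at an odd position bitwise complemented, and alternating prefix
bits `0,1,0,1,...` prepended. -/
def newCode (m : ℕ) (y : Fin (2^m) → Fin m → Bool) :
    Fin (2 * 2^m) → Fin (m+1) → Bool := fun k =>
  Fin.cons (decide (k.val % 2 = 1))
    (fun i =>
      let j : Fin (2^m) := ⟨min k.val (2 * 2^m - 1 - k.val), by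
        have hk := k.isLt
        have h1 : 1 ≤ 2^m := Nat.one_le_two_pow
        omega⟩
      if k.val % 2 = 0 then y j i else !(y j i))



lemma ham_cons {m : ℕ} (a b : Bool) (f g : Fin m → Bool) :
    hammingDist (Fin.cons a f : Fin (m+1) → Bool) (Fin.cons b g) =
      (if a = b then 0 else 1) + hammingDist f g := by
  simp only [hammingDist, Finset.card_filter]
  rw [Fin.sum_univ_succ]
  simp only [Fin.cons_zero, Fin.cons_succ]
  congr 1
  cases a <;> cases b <;> simp

lemma ham_not_add {m : ℕ} (f g : Fin m → Bool) :
    hammingDist f g + hammingDist f (fun i => !(g i)) = m := by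
  simp only [hammingDist, Finset.card_filter, ← Finset.sum_add_distrib]
  have h : ∀ i : Fin m, ((if f i ≠ g i then 1 else 0) + (if f i ≠ !(g i) then 1 else 0)) = 1 := by
    intro i; cases (f i) <;> cases (g i) <;> simp
  simp only [h]
  simp

lemma ham_not {m : ℕ} (f g : Fin m → Bool) :
    hammingDist f (fun i => !(g i)) = m - hammingDist f g := by
  have := ham_not_add f g
  omega

def Jf (m : ℕ) (k : Fin (2 * 2^m)) : Fin (2^m) :=
  ⟨min k.val (2 * 2^m - 1 - k.val), by
    have hk := k.isLt
    have h1 : 1 ≤ 2^m := Nat.one_le_two_pow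
    omega⟩

lemma newCode_eq (m : ℕ) (y : Fin (2^m) → Fin m → Bool) (k : Fin (2 * 2^m)) :
    newCode m y k = Fin.cons (decide (k.val % 2 = 1))
      (fun i => if k.val % 2 = 0 then y (Jf m k) i else !(y (Jf m k) i)) := rfl

lemma fin_val_add_one {n : ℕ} [NeZero n] (hn : 2 ≤ n) (a : Fin n) :
    (a+1).val = (a.val + 1) % n := by
  rw [Fin.add_def, Fin.val_one', Nat.mod_eq_of_lt (by omega : 1 < n)]

lemma val_add_one (m : ℕ) (k : Fin (2*2^m)) : (k+1).val = (k.val + 1) % (2*2^m) := by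
  have h1 : 1 ≤ 2^m := Nat.one_le_two_pow
  exact fin_val_add_one (by omega) k

lemma perK (m : ℕ) (hm : 1 ≤ m) (y : Fin (2^m) → Fin m → Bool)
    (hgray : ∀ k : Fin (2^m), hammingDist (y k) (y (k+1)) = 1) (k : Fin (2*2^m)) :
    hammingDist (newCode m y k) (newCode m y (k+1)) =
      if k.val = 2^m - 1 ∨ k.val = 2*2^m - 1 then m+1 else m := by
  have hp : 2 ≤ 2^m := by
    calc 2 = 2^1 := rfl
    _ ≤ 2^m := Nat.pow_le_pow_right (by norm_num) hm
  have hpe : 2^m % 2 = 0 := by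
    rcases m with _ | m'
    · omega
    · simp [pow_succ, Nat.mul_mod_left]
  have hk := k.isLt
  have hk1 := val_add_one m k
  rw [newCode_eq, newCode_eq, ham_cons]
  rcases (by tauto : k.val = 2*2^m - 1 ∨ k.val = 2^m - 1 ∨
      (k.val ≠ 2*2^m - 1 ∧ k.val ≠ 2^m - 1)) with h | h | ⟨h1, h2⟩
  · -- wrap-around pair
    have e1 : (k+1).val = 0 := by
      rw [hk1, h, Nat.sub_add_cancel (by omega), Nat.mod_self]
    have ep : k.val % 2 = 1 := by omega
    have ep1 : (k+1).val % 2 = 0 := by omega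
    have eJ : Jf m k = Jf m (k+1) := by
      apply Fin.ext; simp only [Jf]; omega
    rw [if_pos (Or.inr h)]
    simp only [ep, ep1, eJ]
    norm_num
    rw [hammingDist_comm, ham_not, hammingDist_self]
    omega
  · -- mirror pair
    have e1 : (k+1).val = 2^m := by
      rw [hk1, h]
      rw [Nat.sub_add_cancel (by omega), Nat.mod_eq_of_lt (by omega)]
    have ep : k.val % 2 = 1 := by omega
    have ep1 : (k+1).val % 2 = 0 := by omega
    have eJ : Jf m k = Jf m (k+1) := by
      apply Fin.ext; simp only [Jf]; omega
    rw [if_pos (Or.inl h)]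
    simp only [ep, ep1, eJ]
    norm_num
    rw [hammingDist_comm, ham_not, hammingDist_self]
    omega
  · -- generic pair
    have e1 : (k+1).val = k.val + 1 := by
      rw [hk1]; exact Nat.mod_eq_of_lt (by omega)
    have h1m : (1:ℕ) % 2^m = 1 := Nat.mod_eq_of_lt (by omega)
    have hd1 : hammingDist (y (Jf m k)) (y (Jf m (k+1))) = 1 := by
      rcases (by omega : k.val + 1 ≤ 2^m - 1 ∨ 2^m ≤ k.val) with hc | hc
      · have : Jf m (k+1) = Jf m k + 1 := by
          apply Fin.ext
          rw [fin_val_add_one hp]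
          show min ((k+1).val) (2*2^m - 1 - (k+1).val)
              = (min k.val (2*2^m - 1 - k.val) + 1) % 2^m
          rw [e1, Nat.mod_eq_of_lt (by omega)]
          omega
        rw [this]; exact hgray _
      · have : Jf m k = Jf m (k+1) + 1 := by
          apply Fin.ext
          rw [fin_val_add_one hp]
          show min k.val (2*2^m - 1 - k.val)
              = (min ((k+1).val) (2*2^m - 1 - (k+1).val) + 1) % 2^m
          rw [e1, Nat.mod_eq_of_lt (by omega)]
          omega
        rw [this, hammingDist_comm]
        exact hgray _
    rw [if_neg (show ¬(k.val = 2^m - 1 ∨ k.val = 2*2^m - 1) by tauto)]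
    rcases Nat.even_or_odd k.val with hpar | hpar
    · rw [Nat.even_iff] at hpar
      have ep : k.val % 2 = 0 := hpar
      have ep1 : (k+1).val % 2 = 1 := by omega
      simp only [ep, ep1]
      norm_num
      rw [ham_not, hd1]
      omega
    · rw [Nat.odd_iff] at hpar
      have ep : k.val % 2 = 1 := hpar
      have ep1 : (k+1).val % 2 = 0 := by omega
      simp only [ep, ep1]
      norm_num
      rw [hammingDist_comm, ham_not, hammingDist_comm, hd1]
      omega

/-- For `n = m+1 ≥ 2`, the average cyclic Hamming distance of the
new code is at least `n - 1 = m` and at most `n - 1 + 1/2^(n-1)`. -/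
theorem newCode_average_dist (m : ℕ) (hm : 1 ≤ m) (y : Fin (2^m) → Fin m → Bool)
    (hy : Function.Bijective y)
    (hgray : ∀ k : Fin (2^m), hammingDist (y k) (y (k+1)) = 1) :
    (m : ℚ) ≤ (∑ k : Fin (2 * 2^m),
        (hammingDist (newCode m y k) (newCode m y (k+1)) : ℚ)) / (2 * 2^m) ∧
    (∑ k : Fin (2 * 2^m),
        (hammingDist (newCode m y k) (newCode m y (k+1)) : ℚ)) / (2 * 2^m)
      ≤ (m : ℚ) + 1 / 2^m := by
  have hp : 2 ≤ 2^m := by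
    calc 2 = 2^1 := rfl
    _ ≤ 2^m := Nat.pow_le_pow_right (by norm_num) hm
  set a : Fin (2*2^m) := ⟨2^m - 1, by omega⟩ with ha
  set b : Fin (2*2^m) := ⟨2*2^m - 1, by omega⟩ with hb
  have hab : a ≠ b := by
    rw [ha, hb, Ne, Fin.mk.injEq]
    omega
  have hsum : (∑ k : Fin (2*2^m),
      hammingDist (newCode m y k) (newCode m y (k+1))) = 2*2^m*m + 2 := by
    calc (∑ k : Fin (2*2^m), hammingDist (newCode m y k) (newCode m y (k+1)))
        = ∑ k : Fin (2*2^m), (m + ((if k = a then 1 else 0) + (if k = b then 1 else 0))) := by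
          apply Finset.sum_congr rfl
          intro k _
          rw [perK m hm y hgray k]
          have hiff : (k.val = 2^m - 1 ∨ k.val = 2*2^m - 1) ↔ (k = a ∨ k = b) := by
            simp only [ha, hb, Fin.ext_iff, Fin.val_mk]
          rw [if_congr hiff rfl rfl]
          by_cases h1 : k = a
          · subst h1; rw [if_pos (Or.inl rfl), if_pos rfl, if_neg hab]
          · by_cases h2 : k = b
            · subst h2
              rw [if_pos (Or.inr rfl), if_neg (fun h => hab h.symm), if_pos rfl]
            · rw [if_neg (by tauto), if_neg h1, if_neg h2]
              omega
      _ = 2*2^m*m + 2 := by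
          rw [Finset.sum_add_distrib, Finset.sum_add_distrib, Finset.sum_const,
            Finset.sum_ite_eq' Finset.univ a (fun _ => 1),
            Finset.sum_ite_eq' Finset.univ b (fun _ => 1)]
          simp [mul_comm]
  have hcast : (∑ k : Fin (2 * 2^m),
      (hammingDist (newCode m y k) (newCode m y (k+1)) : ℚ))
      = ((2*2^m*m + 2 : ℕ) : ℚ) := by
    rw [← hsum]; push_cast; ring
  rw [hcast]
  have h2 : (2:ℚ)^m ≠ 0 := by positivity
  have hval : ((2*2^m*m + 2 : ℕ) : ℚ) / (2 * 2^m) = m + 1/2^m := by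
    push_cast
    field_simp
  rw [hval]
  constructor
  · have : (0:ℚ) ≤ 1/2^m := by positivity
    linarith
  · exact le_refl _
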